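/- Let D be an eulerian digraph and suppose there is a directed trail in D visiting vertices v₁, v₂, …, v_k in that order. Then D has a directed euler circuit visiting v₁, v₂, …, v_k in that order. -/

import Mathlib

/-- Directed walks in a digraph given by source/target maps. -/
def IsDiWalk {V A : Type} (src tgt : A → V) : V → V → List A → Prop
  | s, t, [] => s = t
  | s, t, a :: l => src a = s ∧ IsDiWalk src tgt (tgt a) t l

section Helpers
variable {V A : Type} {src tgt : A → V}

lemma diwalk_append {s m t : V} {l₁ l₂ : List A} (h₁ : IsDiWalk src tgt s m l₁)
    (h₂ : IsDiWalk src tgt m t l₂) : IsDiWalk src tgt s t (l₁ ++ l₂) := by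
  induction l₁ generalizing s with
  | nil => cases h₁; simpa using h₂
  | cons a l ih => exact ⟨h₁.1, ih h₁.2⟩

lemma diwalk_split {s t : V} {l₁ l₂ : List A} (h : IsDiWalk src tgt s t (l₁ ++ l₂)) :
    ∃ m, IsDiWalk src tgt s m l₁ ∧ IsDiWalk src tgt m t l₂ := by
  induction l₁ generalizing s with
  | nil => exact ⟨s, rfl, h⟩
  | cons a l ih =>
    obtain ⟨m, hm1, hm2⟩ := ih h.2
    exact ⟨m, ⟨h.1, hm1⟩, hm2⟩

lemma diwalk_end_unique {s t t' : V} {l : List A} (h : IsDiWalk src tgt s t l)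
    (h' : IsDiWalk src tgt s t' l) : t = t' := by
  induction l generalizing s with
  | nil => exact h.symm.trans h'
  | cons a l ih => exact ih h.2 h'.2

lemma diwalk_count [DecidableEq V] {s t : V} {l : List A} (h : IsDiWalk src tgt s t l) (v : V) :
    l.countP (fun a => tgt a = v) + (if s = v then 1 else 0)
      = l.countP (fun a => src a = v) + (if t = v then 1 else 0) := by
  induction l generalizing s with
  | nil => cases h; rfl
  | cons a l ih =>
    obtain ⟨ha, hw⟩ := h
    have := ih hw
    rw [List.countP_cons, List.countP_cons]
    subst ha
    simp only [decide_eq_true_eq]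
    omega

lemma exists_out_arc [Fintype A] [DecidableEq V] [DecidableEq A]
    (hbal : ∀ v : V, {a : A | tgt a = v}.ncard = {a : A | src a = v}.ncard)
    {s t : V} {l : List A} (h : IsDiWalk src tgt s t l) (hnd : l.Nodup) (hne : s ≠ t) :
    ∃ a, src a = t ∧ a ∉ l := by
  by_contra hc
  push_neg at hc
  have hbal' : (Finset.univ.filter (fun a => tgt a = t)).card
      = (Finset.univ.filter (fun a => src a = t)).card := by
    have := hbal t
    rwa [Set.ncard_eq_toFinset_card', Set.ncard_eq_toFinset_card',
      Set.toFinset_setOf, Set.toFinset_setOf] at this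
  have hcnt := diwalk_count h t
  rw [if_neg hne, if_pos rfl] at hcnt
  -- used out-arcs ≥ all out-arcs
  have h1 : (Finset.univ.filter (fun a => src a = t)).card
      ≤ l.countP (fun a => src a = t) := by
    have hsub : Finset.univ.filter (fun a => src a = t)
        ⊆ (l.filter (fun a => src a = t)).toFinset := by
      intro a ha
      simp only [Finset.mem_filter, Finset.mem_univ, true_and] at ha
      simp [List.mem_filter, hc a ha, ha]
    calc (Finset.univ.filter (fun a => src a = t)).card
        ≤ (l.filter (fun a => src a = t)).toFinset.card := Finset.card_le_card hsub
      _ ≤ (l.filter (fun a => src a = t)).length := List.toFinset_card_le _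
      _ = l.countP (fun a => src a = t) := (l.countP_eq_length_filter).symm
  have h2 : l.countP (fun a => tgt a = t)
      ≤ (Finset.univ.filter (fun a => tgt a = t)).card := by
    have : (l.filter (fun a => tgt a = t)).toFinset ⊆ Finset.univ.filter (fun a => tgt a = t) := by
      intro a ha
      simp only [List.mem_toFinset, List.mem_filter, decide_eq_true_eq] at ha
      simp [ha.2]
    have hcard : (l.filter (fun a => tgt a = t)).toFinset.card
        = (l.filter (fun a => tgt a = t)).length :=
      List.toFinset_card_of_nodup (hnd.filter _)
    rw [l.countP_eq_length_filter, ← hcard]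
    exact Finset.card_le_card this
  omega

lemma extend_to_closed [Fintype A] [DecidableEq V] [DecidableEq A]
    (hbal : ∀ v : V, {a : A | tgt a = v}.ncard = {a : A | src a = v}.ncard) :
    ∀ (n : ℕ) (s t : V) (l : List A), Fintype.card A - l.length ≤ n →
      IsDiWalk src tgt s t l → l.Nodup →
      ∃ ext, IsDiWalk src tgt s s (l ++ ext) ∧ (l ++ ext).Nodup := by
  intro n
  induction n with
  | zero =>
    intro s t l hlen hw hnd
    by_cases hst : s = t
    · subst hst; exact ⟨[], by simpa using hw, by simpa using hnd⟩
    · obtain ⟨a, ha, hal⟩ := exists_out_arc hbal hw hnd hst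
      exfalso
      have hnd' : (l ++ [a]).Nodup := by simp [List.nodup_append, hnd, hal]; rintro x hx rfl; exact hal hx
      have := hnd'.length_le_card
      simp at this
      omega
  | succ n ih =>
    intro s t l hlen hw hnd
    by_cases hst : s = t
    · subst hst; exact ⟨[], by simpa using hw, by simpa using hnd⟩
    · obtain ⟨a, ha, hal⟩ := exists_out_arc hbal hw hnd hst
      have hnd' : (l ++ [a]).Nodup := by simp [List.nodup_append, hnd, hal]; rintro x hx rfl; exact hal hx
      have hw' : IsDiWalk src tgt s (tgt a) (l ++ [a]) :=
        diwalk_append hw ⟨ha, rfl⟩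
      have hlen' : Fintype.card A - (l ++ [a]).length ≤ n := by
        simp only [List.length_append, List.length_singleton]
        omega
      obtain ⟨ext, he1, he2⟩ := ih s (tgt a) (l ++ [a]) hlen' hw' hnd'
      exact ⟨a :: ext, by simpa using he1, by simpa using he2⟩

lemma first_unused {l : List A} {S : V → Prop} (hS : ∀ a ∈ l, S (tgt a)) :
    ∀ (m : List A) (u x : V), IsDiWalk src tgt u x m → S u → (∃ a ∈ m, a ∉ l) →
      ∃ a, a ∉ l ∧ S (src a) := by
  intro m
  induction m with
  | nil => rintro u x _ _ ⟨a, ha, _⟩; simp at ha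
  | cons b m ih =>
    rintro u x ⟨hb, hw⟩ hu hex
    by_cases hbl : b ∈ l
    · obtain ⟨a, ha, hal⟩ := hex
      rcases List.mem_cons.1 ha with rfl | ha'
      · exact absurd hbl hal
      · exact ih (tgt b) x hw (hS b hbl) ⟨a, ha', hal⟩
    · exact ⟨b, hbl, hb ▸ hu⟩

lemma split_at_vertex {s t v : V} {l : List A} (h : IsDiWalk src tgt s t l)
    (hv : v ∈ s :: l.map tgt) :
    ∃ l₁ l₂, l = l₁ ++ l₂ ∧ IsDiWalk src tgt s v l₁ ∧ IsDiWalk src tgt v t l₂ := by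
  induction l generalizing s with
  | nil => simp at hv; exact ⟨[], [], rfl, hv.symm, hv ▸ h⟩
  | cons a l ih =>
    rcases List.mem_cons.1 hv with rfl | hv'
    · exact ⟨[], a :: l, rfl, rfl, h⟩
    · obtain ⟨l₁, l₂, hsplit, h1, h2⟩ := ih h.2 hv'
      exact ⟨a :: l₁, l₂, by rw [hsplit]; rfl, ⟨h.1, h1⟩, h2⟩

lemma closed_to_euler [Fintype A] [DecidableEq V] [DecidableEq A]
    (hbal : ∀ v : V, {a : A | tgt a = v}.ncard = {a : A | src a = v}.ncard)
    (hconn : ∀ u v : V, ∃ l : List A, IsDiWalk src tgt u v l) :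
    ∀ (n : ℕ) (u : V) (l : List A), Fintype.card A - l.length ≤ n →
      IsDiWalk src tgt u u l → l.Nodup →
      ∃ l', IsDiWalk src tgt u u l' ∧ l'.Nodup ∧ (∀ a : A, a ∈ l') ∧
        (u :: l.map tgt).Sublist (u :: l'.map tgt) := by
  intro n
  induction n with
  | zero =>
    intro u l hlen hw hnd
    by_cases hall : ∀ a : A, a ∈ l
    · exact ⟨l, hw, hnd, hall, List.Sublist.refl _⟩
    · exfalso
      push_neg at hall
      obtain ⟨b, hb⟩ := hall
      have hnd' : (b :: l).Nodup := List.nodup_cons.2 ⟨hb, hnd⟩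
      have := hnd'.length_le_card
      simp at this
      omega
  | succ n ih =>
    intro u l hlen hw hnd
    by_cases hall : ∀ a : A, a ∈ l
    · exact ⟨l, hw, hnd, hall, List.Sublist.refl _⟩
    · push_neg at hall
      obtain ⟨b, hb⟩ := hall
      obtain ⟨m, hm⟩ := hconn u (src b)
      have hmw : IsDiWalk src tgt u (tgt b) (m ++ [b]) :=
        diwalk_append hm ⟨rfl, rfl⟩
      have hS : ∀ a ∈ l, tgt a ∈ u :: l.map tgt := fun a ha =>
        List.mem_cons_of_mem _ (List.mem_map_of_mem ha)
      obtain ⟨a, hal, haS⟩ := first_unused hS (m ++ [b]) u (tgt b) hmw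
        List.mem_cons_self ⟨b, by simp, hb⟩
      obtain ⟨l₁, l₂, rfl, h1, h2⟩ := split_at_vertex hw haS
      -- extend the trail l₂ ++ l₁ ++ [a] (a closed walk at src a followed by a) to a circuit
      have hm0 : IsDiWalk src tgt (src a) (tgt a) (l₂ ++ (l₁ ++ [a])) :=
        diwalk_append h2 (diwalk_append h1 ⟨rfl, rfl⟩)
      have hal1 : a ∉ l₁ := fun h => hal (List.mem_append.2 (Or.inl h))
      have hal2 : a ∉ l₂ := fun h => hal (List.mem_append.2 (Or.inr h))
      have hperm0 : (l₂ ++ (l₁ ++ [a])).Perm (a :: (l₁ ++ l₂)) := by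
        rw [List.perm_iff_count]
        intro x
        simp [List.count_append, List.count_cons]
        omega
      have hnd0 : (l₂ ++ (l₁ ++ [a])).Nodup :=
        hperm0.symm.nodup (List.nodup_cons.2 ⟨hal, hnd⟩)
      obtain ⟨ext, hew, hend⟩ := extend_to_closed hbal (Fintype.card A) (src a) (tgt a)
        (l₂ ++ (l₁ ++ [a])) (Nat.sub_le _ _) hm0 hnd0
      obtain ⟨m', hm'1, hm'2⟩ := diwalk_split hew
      have : m' = tgt a := (diwalk_end_unique hm'1 hm0).symm ▸ rfl
      have hext : IsDiWalk src tgt (tgt a) (src a) ext := by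
        rw [this] at hm'2; exact hm'2
      -- the new circuit
      set L : List A := l₁ ++ a :: (ext ++ l₂) with hL
      have hLw : IsDiWalk src tgt u u L :=
        diwalk_append h1 ⟨rfl, diwalk_append hext h2⟩
      have hLperm : L.Perm ((l₂ ++ (l₁ ++ [a])) ++ ext) := by
        rw [List.perm_iff_count]
        intro x
        simp [hL, List.count_append, List.count_cons]
        omega
      have hLnd : L.Nodup := (hLperm.symm).nodup hend
      have hLlen : Fintype.card A - L.length ≤ n := by
        have h1len : L.length ≤ Fintype.card A := hLnd.length_le_card
        have : L.length = l₁.length + (1 + (ext.length + l₂.length)) := by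
          simp [hL]; omega
        simp only [List.length_append] at hlen
        omega
      obtain ⟨l', hl'w, hl'nd, hl'all, hl'sub⟩ := ih u L hLlen hLw hLnd
      refine ⟨l', hl'w, hl'nd, hl'all, List.Sublist.trans ?_ hl'sub⟩
      refine List.Sublist.cons₂ u ?_
      rw [hL]
      simp only [List.map_append, List.map_cons]
      exact ((List.sublist_append_right _ _).cons _).append_left _

end Helpers

/-- In an eulerian digraph (connected, balanced), if some directed
trail visits the vertices `vs = [v₁, …, v_k]` in that order (as a sublist of its
vertex sequence), then there is a directed euler circuit visiting them in that
order. -/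
theorem stmt_4 {V A : Type} [Fintype V] [Fintype A] (src tgt : A → V)
    (hbal : ∀ v : V, {a : A | tgt a = v}.ncard = {a : A | src a = v}.ncard)
    (hconn : ∀ u v : V, ∃ l : List A, IsDiWalk src tgt u v l)
    (vs : List V) (s t : V) (l : List A)
    (hw : IsDiWalk src tgt s t l) (hnd : l.Nodup)
    (hvis : vs.Sublist (s :: l.map tgt)) :
    ∃ (u : V) (l' : List A), IsDiWalk src tgt u u l' ∧ l'.Nodup ∧
      (∀ a : A, a ∈ l') ∧ vs.Sublist (u :: l'.map tgt) := by
  have _i1 : DecidableEq V := Classical.decEq V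
  have _i2 : DecidableEq A := Classical.decEq A
  obtain ⟨ext, hcw, hcnd⟩ := extend_to_closed hbal (Fintype.card A) s t l (Nat.sub_le _ _) hw hnd
  obtain ⟨l', hl'w, hl'nd, hl'all, hl'sub⟩ :=
    closed_to_euler hbal hconn (Fintype.card A) s (l ++ ext) (Nat.sub_le _ _) hcw hcnd
  refine ⟨s, l', hl'w, hl'nd, hl'all, hvis.trans (List.Sublist.trans ?_ hl'sub)⟩
  refine List.Sublist.cons₂ s ?_
  rw [List.map_append]
  exact List.sublist_append_left _ _
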